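/- Suppose $(\alpha_n)$ and $(\beta_n)$ satisfy $|\alpha_n| \le A_1 (n-1)^{-3/2}$ and $|\beta_n| \le B_1 (n-1)^{-3/2}$ for $n \ge 2$. Then for integers $k \ge 0$ and $M \ge 3$, $\left|\mu_k - \sum_{m=0}^{M}\sum_{\ell=m}^{k+m}\alpha_{k+2m-\ell}\beta_{\ell}A_{m,k+2m,\ell}\right| \le \frac{4A_1B_1(k+2)}{(k+2M-2)\left(2\left(\sqrt{(M-2)(k+M)}+M-1\right)+k\right)}$, where $\mu_k = \sum_{m=0}^{\infty}\sum_{\ell=m}^{k+m}\alpha_{k+2m-\ell}\beta_{\ell}A_{m,k+2m,\ell}$. -/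

import Mathlib

open Finset MeasureTheory

/-- Rising factorial (Pochhammer symbol) `(a)_r`. -/
noncomputable def risingFac (a : ℝ) : ℕ → ℝ
  | 0 => 1
  | n + 1 => risingFac a n * (a + n)

/-- The coefficient `A_{jkl}` from the Legendre linearization formula. -/
noncomputable def Acoef (j k l : ℕ) : ℝ :=
  (risingFac (1/2) j * risingFac (1/2) (k - l - j) * risingFac (1/2) (l - j)
      * (Nat.factorial (k - j)))
    / (Nat.factorial j * Nat.factorial (k - l - j) * Nat.factorial (l - j)
      * risingFac (3/2) (k - j))
    * (2 * ((k : ℝ) - 2 * j) + 1)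

/-- The `n`th Legendre polynomial evaluated at `x`, via Rodrigues' formula. -/
noncomputable def legP (n : ℕ) (x : ℝ) : ℝ :=
  (1 / (2 ^ n * Nat.factorial n)) *
    (Polynomial.derivative^[n] ((Polynomial.X ^ 2 - 1 : Polynomial ℝ) ^ n)).eval x

/-- `f` is absolutely continuous on `[a, b]`. -/
def AbsCont (f : ℝ → ℝ) (a b : ℝ) : Prop :=
  ∀ ε > 0, ∃ δ > 0, ∀ n : ℕ, ∀ u v : Fin n → ℝ,
    (∀ i, a ≤ u i ∧ u i ≤ v i ∧ v i ≤ b) →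
    (∀ i j, i ≠ j → Set.Ioo (u i) (v i) ∩ Set.Ioo (u j) (v j) = ∅) →
    ∑ i, (v i - u i) < δ → ∑ i, |f (v i) - f (u i)| < ε

lemma rf_pos {a : ℝ} (ha : 0 < a) (n : ℕ) : 0 < risingFac a n := by
  induction n with
  | zero => simp [risingFac]
  | succ n ih => exact mul_pos ih (by positivity)

lemma rf32 (n : ℕ) : risingFac (3/2) n = (2 * n + 1) * risingFac (1/2) n := by
  induction n with
  | zero => simp [risingFac]
  | succ n ih =>
    simp only [risingFac, ih]
    push_cast
    ring

noncomputable def uu (n : ℕ) : ℝ := risingFac (1/2) n / n.factorial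

lemma uu_pos (n : ℕ) : 0 < uu n := by
  have := rf_pos (by norm_num : (0:ℝ) < 1/2) n
  have := n.factorial_pos
  unfold uu
  positivity

lemma uu_succ (n : ℕ) : uu (n + 1) = uu n * ((1/2 + n) / (1 + n)) := by
  have hf : (((n + 1).factorial : ℕ) : ℝ) = (n.factorial : ℝ) * (1 + n) := by
    rw [Nat.factorial_succ]; push_cast; ring
  have hfn : (n.factorial : ℝ) ≠ 0 := (Nat.cast_pos.2 n.factorial_pos).ne'
  have hn1 : (1 : ℝ) + n ≠ 0 := by positivity
  unfold uu
  rw [show risingFac (1/2) (n + 1) = risingFac (1/2) n * (1/2 + n) from rfl, hf]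
  field_simp

lemma uu_mul (a b : ℕ) : uu a * uu b ≤ uu (a + b) := by
  induction a with
  | zero => simp [uu, risingFac]
  | succ a ih =>
    have h1 : uu (a + 1) = uu a * ((1/2 + a) / (1 + a)) := uu_succ a
    have h2 : uu (a + 1 + b) = uu (a + b) * ((1/2 + (a+b)) / (1 + (a+b))) := by
      have : a + 1 + b = (a + b) + 1 := by ring
      rw [this, uu_succ]; push_cast; ring_nf
    rw [h1, h2]
    have hq : ((1:ℝ)/2 + a) / (1 + a) ≤ (1/2 + (a+b)) / (1 + (a+b)) := by
      rw [div_le_div_iff₀ (by positivity) (by positivity)]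
      push_cast; nlinarith [Nat.cast_nonneg (α := ℝ) b]
    have hqpos : (0:ℝ) ≤ (1/2 + (a:ℝ)) / (1 + a) := by positivity
    calc uu a * ((1/2 + (a:ℝ)) / (1 + a)) * uu b
        = (uu a * uu b) * ((1/2 + (a:ℝ)) / (1 + a)) := by ring
      _ ≤ uu (a + b) * ((1/2 + (a:ℝ)) / (1 + a)) := by
          exact mul_le_mul_of_nonneg_right ih hqpos
      _ ≤ uu (a + b) * ((1/2 + ((a:ℝ)+b)) / (1 + ((a:ℝ)+b))) := by
          exact mul_le_mul_of_nonneg_left hq (uu_pos _).le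

lemma Acoef_bounds (k m l : ℕ) (h1 : m ≤ l) (h2 : l ≤ k + m) :
    0 ≤ Acoef m (k + 2 * m) l ∧ Acoef m (k + 2 * m) l ≤ 1 := by
  have e1 : k + 2 * m - l - m = k + m - l := by omega
  have e2 : k + 2 * m - m = k + m := by omega
  unfold Acoef
  rw [e1, e2]
  set a := m
  set b := k + m - l
  set c := l - m
  have habc : a + b + c = k + m := by omega
  have hcast : ((k + 2 * m : ℕ) : ℝ) - 2 * m = k := by push_cast; ring
  rw [hcast]
  set N := k + m
  -- rewrite in terms of uu
  have key : risingFac (1/2) a * risingFac (1/2) b * risingFac (1/2) c * N.factorial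
      / (a.factorial * b.factorial * c.factorial * risingFac (3/2) N)
      = (uu a * uu b * uu c / uu N) / (2 * N + 1) := by
    rw [rf32]
    have := a.factorial_pos; have := b.factorial_pos; have := c.factorial_pos
    have := N.factorial_pos
    have hrf := rf_pos (by norm_num : (0:ℝ) < 1/2) N
    have h1 : (a.factorial : ℝ) ≠ 0 := (Nat.cast_pos.2 a.factorial_pos).ne'
    have h2 : (b.factorial : ℝ) ≠ 0 := (Nat.cast_pos.2 b.factorial_pos).ne'
    have h3 : (c.factorial : ℝ) ≠ 0 := (Nat.cast_pos.2 c.factorial_pos).ne'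
    have h4 : (N.factorial : ℝ) ≠ 0 := (Nat.cast_pos.2 N.factorial_pos).ne'
    have h5 : risingFac (1/2) N ≠ 0 := hrf.ne'
    have h6 : (2 * (N : ℝ) + 1) ≠ 0 := by positivity
    unfold uu
    field_simp
  rw [key]
  have hu : uu a * uu b * uu c ≤ uu N := by
    calc uu a * uu b * uu c ≤ uu (a + b) * uu c := by
          exact mul_le_mul_of_nonneg_right (uu_mul a b) (uu_pos c).le
      _ ≤ uu (a + b + c) := uu_mul _ _
      _ = uu N := by rw [habc]
  have hupos := uu_pos N
  have h2k : (2 * (k:ℝ) + 1) ≤ 2 * N + 1 := by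
    have : (k:ℝ) ≤ N := by exact_mod_cast Nat.le_add_right k m
    linarith
  have hratio : 0 ≤ uu a * uu b * uu c / uu N := by
    have := uu_pos a; have := uu_pos b; have := uu_pos c; positivity
  constructor
  · positivity
  · have hr1 : uu a * uu b * uu c / uu N ≤ 1 := by
      rw [div_le_one hupos]; exact hu
    have hN1 : (0:ℝ) < 2 * N + 1 := by positivity
    calc uu a * uu b * uu c / uu N / (2 * N + 1) * (2 * k + 1)
        ≤ uu a * uu b * uu c / uu N / (2 * N + 1) * (2 * N + 1) := by
          apply mul_le_mul_of_nonneg_left h2k; positivity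
      _ = uu a * uu b * uu c / uu N := by
          field_simp
      _ ≤ 1 := hr1


noncomputable def ffun (c x : ℝ) : ℝ := 1 / (((c - x) * (x - 1)) * Real.sqrt ((c - x) * (x - 1)))
noncomputable def Gfun (c x : ℝ) : ℝ := 2 * (2 * x - c - 1) / ((c - 1) ^ 2 * Real.sqrt ((c - x) * (x - 1)))

lemma hasDerivAt_G {c x : ℝ} (h1 : 1 < x) (h2 : x < c) :
    HasDerivAt (Gfun c) (ffun c x) x := by
  have hP : 0 < (c - x) * (x - 1) := by nlinarith
  have hs : 0 < Real.sqrt ((c - x) * (x - 1)) := Real.sqrt_pos.2 hP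
  have hs2 : Real.sqrt ((c - x) * (x - 1)) ^ 2 = (c - x) * (x - 1) := Real.sq_sqrt hP.le
  have hp : HasDerivAt (fun y : ℝ => (c - y) * (y - 1)) ((-1) * (x - 1) + (c - x) * 1) x := by
    exact ((hasDerivAt_id x).const_sub c).mul ((hasDerivAt_id x).sub_const 1)
  have hsq : HasDerivAt (fun y : ℝ => Real.sqrt ((c - y) * (y - 1)))
      (1 / (2 * Real.sqrt ((c - x) * (x - 1))) * ((-1) * (x - 1) + (c - x) * 1)) x :=
    (Real.hasDerivAt_sqrt hP.ne').comp x hp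
  have hu : HasDerivAt (fun y : ℝ => 2 * (2 * y - c - 1)) 4 x := by
    have heq : (fun y : ℝ => 2 * (2 * y - c - 1)) = fun y : ℝ => 4 * y - (2 * c + 2) := by
      funext y; ring
    rw [heq]
    simpa using ((hasDerivAt_id x).const_mul (4:ℝ)).sub_const (2 * c + 2)
  have hv : HasDerivAt (fun y : ℝ => (c - 1) ^ 2 * Real.sqrt ((c - y) * (y - 1)))
      ((c - 1) ^ 2 * (1 / (2 * Real.sqrt ((c - x) * (x - 1))) * ((-1) * (x - 1) + (c - x) * 1))) x :=
    hsq.const_mul _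
  have hvne : (c - 1) ^ 2 * Real.sqrt ((c - x) * (x - 1)) ≠ 0 := by
    have : 0 < c - 1 := by linarith
    positivity
  have hd := hu.div hv hvne
  refine hd.congr_deriv ?_
  symm
  unfold ffun
  rw [div_eq_div_iff (by positivity) (by positivity)]
  set s := Real.sqrt ((c - x) * (x - 1)) with hsdef
  field_simp
  linear_combination ((c - 1) ^ 2 * ((c - 1) ^ 2 - 4 * ((c - x) * (x - 1)))) * hs2

noncomputable def hfun (k x : ℝ) : ℝ := 1 / ((k + 2 * x - 2) ^ 2 * Real.sqrt ((x - 2) * (x + k)))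
noncomputable def Ffun (k x : ℝ) : ℝ := 2 * Real.sqrt ((x - 2) * (x + k)) / ((k + 2) ^ 2 * (k + 2 * x - 2))

lemma hasDerivAt_F {k x : ℝ} (hk : 0 ≤ k) (hx : 2 < x) :
    HasDerivAt (Ffun k) (hfun k x) x := by
  have hQ : 0 < (x - 2) * (x + k) := by nlinarith
  have hD : 0 < k + 2 * x - 2 := by linarith
  have hs : 0 < Real.sqrt ((x - 2) * (x + k)) := Real.sqrt_pos.2 hQ
  have hs2 : Real.sqrt ((x - 2) * (x + k)) ^ 2 = (x - 2) * (x + k) := Real.sq_sqrt hQ.le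
  have hq : HasDerivAt (fun y : ℝ => (y - 2) * (y + k)) (1 * (x + k) + (x - 2) * 1) x :=
    ((hasDerivAt_id x).sub_const 2).mul ((hasDerivAt_id x).add_const k)
  have hsq : HasDerivAt (fun y : ℝ => Real.sqrt ((y - 2) * (y + k)))
      (1 / (2 * Real.sqrt ((x - 2) * (x + k))) * (1 * (x + k) + (x - 2) * 1)) x :=
    (Real.hasDerivAt_sqrt hQ.ne').comp x hq
  have hu : HasDerivAt (fun y : ℝ => 2 * Real.sqrt ((y - 2) * (y + k)))
      (2 * (1 / (2 * Real.sqrt ((x - 2) * (x + k))) * (1 * (x + k) + (x - 2) * 1))) x :=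
    hsq.const_mul 2
  have hv : HasDerivAt (fun y : ℝ => (k + 2) ^ 2 * (k + 2 * y - 2)) ((k + 2) ^ 2 * 2) x := by
    have heq : (fun y : ℝ => (k + 2) ^ 2 * (k + 2 * y - 2))
        = fun y : ℝ => ((k + 2) ^ 2 * 2) * y + (k + 2) ^ 2 * (k - 2) := by funext y; ring
    rw [heq]
    simpa using ((hasDerivAt_id x).const_mul ((k + 2) ^ 2 * 2)).add_const ((k + 2) ^ 2 * (k - 2))
  have hvne : (k + 2) ^ 2 * (k + 2 * x - 2) ≠ 0 := by positivity
  have hd := hu.div hv hvne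
  refine hd.congr_deriv ?_
  symm
  unfold hfun
  rw [div_eq_div_iff (by positivity) (by positivity)]
  set s := Real.sqrt ((x - 2) * (x + k)) with hsdef
  field_simp
  linear_combination 4 * hs2

lemma ffun_nonneg (c x : ℝ) : 0 ≤ ffun c x := by
  unfold ffun
  rcases le_or_gt ((c - x) * (x - 1)) 0 with h | h
  · rw [Real.sqrt_eq_zero_of_nonpos h, mul_zero]
    simp
  · positivity

lemma ffun_integrable {c a b : ℝ} (ha : 1 < a) (hb : b < c) (hab : a ≤ b) :
    IntervalIntegrable (ffun c) MeasureTheory.volume a b := by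
  apply ContinuousOn.intervalIntegrable
  rw [Set.uIcc_of_le hab]
  have hcont : ContinuousOn (fun x : ℝ => ((c - x) * (x - 1)) * Real.sqrt ((c - x) * (x - 1)))
      (Set.Icc a b) := by
    apply ContinuousOn.mul
    · fun_prop
    · exact (Real.continuous_sqrt.comp (by continuity)).continuousOn
  apply ContinuousOn.div continuousOn_const hcont
  intro x hx
  have hP : 0 < (c - x) * (x - 1) := by
    rcases hx with ⟨h1, h2⟩; nlinarith
  have := Real.sqrt_pos.2 hP
  positivity

lemma ffun_anti {c l x : ℝ} (hl : 2 < l) (hx1 : 1 < x) (hxc : x < c)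
    (hP : (c - x) * (x - 1) ≤ (c - l) * (l - 1)) (hPl : 0 < (c - l) * (l - 1)) :
    ffun c l ≤ ffun c x := by
  unfold ffun
  have hPx : 0 < (c - x) * (x - 1) := by nlinarith
  apply one_div_le_one_div_of_le
  · have := Real.sqrt_pos.2 hPx; positivity
  · exact mul_le_mul hP (Real.sqrt_le_sqrt hP) (Real.sqrt_nonneg _) hPl.le

lemma step_left {c l : ℝ} (h1 : 2 < l) (h2 : 2 * l ≤ c + 1) :
    ffun c l ≤ ∫ x in (l - 1)..l, ffun c x := by
  have hlc : l < c := by linarith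
  have key : ∫ x in (l - 1)..l, ffun c l ≤ ∫ x in (l - 1)..l, ffun c x := by
    apply intervalIntegral.integral_mono_on (by linarith)
      intervalIntegrable_const (ffun_integrable (by linarith) hlc (by linarith))
    intro x hx
    obtain ⟨hx1, hx2⟩ := hx
    apply ffun_anti h1 (by linarith) (by linarith)
    · nlinarith
    · nlinarith
  simpa using key

lemma step_right {c l : ℝ} (h1 : c + 1 ≤ 2 * l) (h2 : l + 1 < c) :
    ffun c l ≤ ∫ x in l..(l + 1), ffun c x := by
  have hl : 2 < l := by linarith
  have key : ∫ x in l..(l + 1), ffun c l ≤ ∫ x in l..(l + 1), ffun c x := by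
    apply intervalIntegral.integral_mono_on (by linarith)
      intervalIntegrable_const (ffun_integrable (by linarith) h2 (by linarith))
    intro x hx
    obtain ⟨hx1, hx2⟩ := hx
    apply ffun_anti hl (by linarith) (by linarith)
    · nlinarith
    · nlinarith
  simpa using key

lemma hfun_integrable {k a b : ℝ} (hk : 0 ≤ k) (ha : 2 < a) (hab : a ≤ b) :
    IntervalIntegrable (hfun k) MeasureTheory.volume a b := by
  apply ContinuousOn.intervalIntegrable
  rw [Set.uIcc_of_le hab]
  have hcont : ContinuousOn (fun x : ℝ => (k + 2 * x - 2) ^ 2 * Real.sqrt ((x - 2) * (x + k)))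
      (Set.Icc a b) := by
    apply ContinuousOn.mul
    · fun_prop
    · exact (Real.continuous_sqrt.comp (by continuity)).continuousOn
  apply ContinuousOn.div continuousOn_const hcont
  intro x hx
  obtain ⟨h1, h2⟩ := hx
  have hQ : 0 < (x - 2) * (x + k) := by nlinarith
  have hD : 0 < k + 2 * x - 2 := by nlinarith
  have := Real.sqrt_pos.2 hQ
  positivity

lemma step_outer {k a : ℝ} (hk : 0 ≤ k) (ha : 3 ≤ a) :
    hfun k (a + 1) ≤ Ffun k (a + 1) - Ffun k a := by
  have hderiv : ∀ x ∈ Set.uIcc a (a + 1), HasDerivAt (Ffun k) (hfun k x) x := by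
    intro x hx
    rw [Set.uIcc_of_le (by linarith)] at hx
    exact hasDerivAt_F hk (by linarith [hx.1])
  have hint : IntervalIntegrable (hfun k) MeasureTheory.volume a (a + 1) :=
    hfun_integrable hk (by linarith) (by linarith)
  have hFTC := intervalIntegral.integral_eq_sub_of_hasDerivAt hderiv hint
  rw [← hFTC]
  have key : ∫ x in a..(a + 1), hfun k (a + 1) ≤ ∫ x in a..(a + 1), hfun k x := by
    apply intervalIntegral.integral_mono_on (by linarith) intervalIntegrable_const hint
    intro x hx
    obtain ⟨hx1, hx2⟩ := hx
    unfold hfun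
    have hQx : 0 < (x - 2) * (x + k) := by nlinarith
    have hQa : (x - 2) * (x + k) ≤ (a + 1 - 2) * (a + 1 + k) := by nlinarith
    have hDx : 0 < k + 2 * x - 2 := by nlinarith
    have hDa : k + 2 * x - 2 ≤ k + 2 * (a + 1) - 2 := by linarith
    apply one_div_le_one_div_of_le
    · have := Real.sqrt_pos.2 hQx; positivity
    · apply mul_le_mul
      · nlinarith
      · exact Real.sqrt_le_sqrt hQa
      · exact Real.sqrt_nonneg _
      · positivity
  simpa using key

lemma Ffun_le {k x : ℝ} (hk : 0 ≤ k) (hx : 2 ≤ x) : Ffun k x ≤ 1 / (k + 2) ^ 2 := by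
  unfold Ffun
  have hD : 0 < k + 2 * x - 2 := by linarith
  have hQ : 0 ≤ (x - 2) * (x + k) := by nlinarith
  have hs2 := Real.sq_sqrt hQ
  have hs := Real.sqrt_nonneg ((x - 2) * (x + k))
  rw [div_le_div_iff₀ (by positivity) (by positivity)]
  have h2s : 2 * Real.sqrt ((x - 2) * (x + k)) ≤ k + 2 * x - 2 := by
    nlinarith [hs2, hs, hD]
  nlinarith [sq_nonneg (k + 2)]

set_option maxHeartbeats 2000000 in
lemma inner_sum_le (k m : ℕ) (hm : 3 ≤ m) :
    ∑ l ∈ Icc m (k + m), ffun ((k : ℝ) + 2 * m - 1) (l : ℝ) ≤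
      4 * ((k : ℝ) + 2) / (((k : ℝ) + 2 * m - 2) ^ 2 * Real.sqrt (((m : ℝ) - 2) * ((k : ℝ) + m))) := by
  set c : ℝ := (k : ℝ) + 2 * m - 1 with hc
  set l0 : ℕ := (k + 2 * m) / 2 with hl0
  have h1 : m ≤ l0 := by omega
  have h2 : l0 ≤ k + m := by omega
  have hmr : (3 : ℝ) ≤ (m : ℝ) := by exact_mod_cast hm
  -- split the sum
  have hsplit : Icc m (k + m) = Icc m l0 ∪ Ioc l0 (k + m) := by
    ext a
    simp only [Finset.mem_Icc, Finset.mem_union, Finset.mem_Ioc]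
    omega
  have hdisj : Disjoint (Icc m l0) (Ioc l0 (k + m)) := by
    rw [Finset.disjoint_left]
    intro a ha hb
    simp only [Finset.mem_Icc, Finset.mem_Ioc] at ha hb
    omega
  rw [hsplit, Finset.sum_union hdisj]
  -- left part
  set aseq : ℕ → ℝ := fun i => (m : ℝ) - 1 + i with haseq
  have hintL : ∀ i, i < l0 + 1 - m → IntervalIntegrable (ffun c) MeasureTheory.volume
      (aseq i) (aseq (i + 1)) := by
    intro i hi
    apply ffun_integrable
    · simp only [haseq]; push_cast; linarith
    · simp only [haseq, hc]; push_cast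
      have hn : m + i + 2 ≤ k + 2 * m := by omega
      have := (Nat.cast_le (α := ℝ)).2 hn
      push_cast at this
      linarith
    · simp only [haseq]; push_cast; linarith
  have hLsum := intervalIntegral.sum_integral_adjacent_intervals (f := ffun c)
      (μ := MeasureTheory.volume) (a := aseq) (n := l0 + 1 - m) hintL
  have hL : ∑ l ∈ Icc m l0, ffun c (l : ℝ) ≤ ∫ x in (aseq 0)..(aseq (l0 + 1 - m)), ffun c x := by
    rw [← hLsum]
    have hIcc : Icc m l0 = Ico m (l0 + 1) := by
      ext a; simp only [Finset.mem_Icc, Finset.mem_Ico]; omega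
    rw [hIcc, Finset.sum_Ico_eq_sum_range]
    apply Finset.sum_le_sum
    intro i hi
    rw [Finset.mem_range] at hi
    have hcast : ((m + i : ℕ) : ℝ) = (m : ℝ) + i := by push_cast; ring
    rw [hcast]
    have hstep := step_left (c := c) (l := (m : ℝ) + i)
      (by have : (0:ℝ) ≤ i := Nat.cast_nonneg i; linarith)
      (by
        have hn : 2 * (m + i) ≤ k + 2 * m := by omega
        have := (Nat.cast_le (α := ℝ)).2 hn
        push_cast at this
        simp only [hc]
        linarith)
    have he1 : aseq i = (m : ℝ) + i - 1 := by simp only [haseq]; ring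
    have he2 : aseq (i + 1) = (m : ℝ) + i := by simp only [haseq]; push_cast; ring
    rw [he1, he2]
    exact hstep
  -- right part
  set bseq : ℕ → ℝ := fun i => (l0 : ℝ) + 1 + i with hbseq
  have hintR : ∀ i, i < (k + m) - l0 → IntervalIntegrable (ffun c) MeasureTheory.volume
      (bseq i) (bseq (i + 1)) := by
    intro i hi
    apply ffun_integrable
    · simp only [hbseq]; push_cast
      have h3l0 : (3:ℝ) ≤ (l0:ℝ) := by exact_mod_cast le_trans hm h1
      linarith [Nat.cast_nonneg (α := ℝ) i]
    · simp only [hbseq, hc]; push_cast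
      have hn : l0 + 1 + (i + 1) ≤ k + m + 1 := by omega
      have := (Nat.cast_le (α := ℝ)).2 hn
      push_cast at this
      linarith
    · simp only [hbseq]; push_cast; linarith [Nat.cast_nonneg (α := ℝ) i]
  have hRsum := intervalIntegral.sum_integral_adjacent_intervals (f := ffun c)
      (μ := MeasureTheory.volume) (a := bseq) (n := (k + m) - l0) hintR
  have hR : ∑ l ∈ Ioc l0 (k + m), ffun c (l : ℝ) ≤ ∫ x in (bseq 0)..(bseq ((k + m) - l0)), ffun c x := by
    rw [← hRsum]
    have hIoc : Ioc l0 (k + m) = Ico (l0 + 1) (k + m + 1) := by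
      ext a; simp only [Finset.mem_Ioc, Finset.mem_Ico]; omega
    rw [hIoc, Finset.sum_Ico_eq_sum_range]
    have hn : k + m + 1 - (l0 + 1) = (k + m) - l0 := by omega
    rw [hn]
    apply Finset.sum_le_sum
    intro i hi
    rw [Finset.mem_range] at hi
    have hcast : ((l0 + 1 + i : ℕ) : ℝ) = (l0 : ℝ) + 1 + i := by push_cast; ring
    rw [hcast]
    have hstep := step_right (c := c) (l := (l0 : ℝ) + 1 + i)
      (by
        have hn2 : k + 2 * m ≤ 2 * (l0 + 1 + i) := by omega
        have := (Nat.cast_le (α := ℝ)).2 hn2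
        push_cast at this
        simp only [hc]
        linarith)
      (by
        have hn2 : l0 + 1 + i ≤ k + m := by omega
        have := (Nat.cast_le (α := ℝ)).2 hn2
        push_cast at this
        simp only [hc]
        linarith)
    have he1 : bseq i = (l0 : ℝ) + 1 + i := by simp only [hbseq]
    have he2 : bseq (i + 1) = (l0 : ℝ) + 1 + i + 1 := by simp only [hbseq]; push_cast; ring
    rw [he1, he2]
    exact hstep
  -- combine integrals
  have hend0 : aseq 0 = (m : ℝ) - 1 := by simp [haseq]
  have hendL : aseq (l0 + 1 - m) = (l0 : ℝ) := by
    simp only [haseq]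
    have : ((l0 + 1 - m : ℕ) : ℝ) = (l0 : ℝ) + 1 - m := by
      have : l0 + 1 - m + m = l0 + 1 := by omega
      have := congrArg (Nat.cast (R := ℝ)) this
      push_cast at this
      linarith
    rw [this]; ring
  have hendR0 : bseq 0 = (l0 : ℝ) + 1 := by simp [hbseq]
  have hendR : bseq ((k + m) - l0) = (k : ℝ) + m + 1 := by
    simp only [hbseq]
    have : (((k + m) - l0 : ℕ) : ℝ) = (k : ℝ) + m - l0 := by
      have : (k + m) - l0 + l0 = k + m := by omega
      have := congrArg (Nat.cast (R := ℝ)) this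
      push_cast at this
      linarith
    rw [this]; ring
  rw [hend0, hendL] at hL
  rw [hendR0, hendR] at hR
  -- bounds on real quantities
  have hl0up : (l0 : ℝ) ≤ (k : ℝ) + m := by exact_mod_cast h2
  have hl0lo : (m : ℝ) ≤ (l0 : ℝ) := by exact_mod_cast h1
  have hi1 : IntervalIntegrable (ffun c) MeasureTheory.volume ((m : ℝ) - 1) (l0 : ℝ) :=
    ffun_integrable (by linarith) (by simp only [hc]; linarith) (by linarith)
  have hi2 : IntervalIntegrable (ffun c) MeasureTheory.volume (l0 : ℝ) ((l0 : ℝ) + 1) :=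
    ffun_integrable (by linarith) (by simp only [hc]; linarith) (by linarith)
  have hi3 : IntervalIntegrable (ffun c) MeasureTheory.volume ((l0 : ℝ) + 1) ((k : ℝ) + m + 1) :=
    ffun_integrable (by linarith) (by simp only [hc]; linarith) (by linarith)
  have hadd1 := intervalIntegral.integral_add_adjacent_intervals hi1 hi2
  have hadd2 := intervalIntegral.integral_add_adjacent_intervals (hi1.trans hi2) hi3
  have hmid : 0 ≤ ∫ x in (l0 : ℝ)..((l0 : ℝ) + 1), ffun c x := by
    apply intervalIntegral.integral_nonneg (by linarith)
    intro x _
    exact ffun_nonneg c x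
  -- FTC for the full integral
  have hderiv : ∀ x ∈ Set.uIcc ((m : ℝ) - 1) ((k : ℝ) + m + 1), HasDerivAt (Gfun c) (ffun c x) x := by
    intro x hx
    rw [Set.uIcc_of_le (by linarith)] at hx
    obtain ⟨hx1, hx2⟩ := hx
    exact hasDerivAt_G (by linarith) (by simp only [hc]; linarith)
  have hFTC := intervalIntegral.integral_eq_sub_of_hasDerivAt hderiv
    (ffun_integrable (by linarith) (by simp only [hc]; linarith) (by linarith))
  -- value of G at the endpoints
  have hSpos : 0 < Real.sqrt (((m : ℝ) - 2) * ((k : ℝ) + m)) := by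
    apply Real.sqrt_pos.2; nlinarith
  have hGb : Gfun c ((k : ℝ) + m + 1) = 2 * ((k : ℝ) + 2) /
      (((k : ℝ) + 2 * m - 2) ^ 2 * Real.sqrt (((m : ℝ) - 2) * ((k : ℝ) + m))) := by
    unfold Gfun
    have harg : (c - ((k : ℝ) + m + 1)) * (((k : ℝ) + m + 1) - 1) = ((m : ℝ) - 2) * ((k : ℝ) + m) := by
      simp only [hc]; ring
    rw [harg]
    have : 2 * ((k : ℝ) + m + 1) - c - 1 = (k : ℝ) + 2 := by simp only [hc]; ring
    rw [this]
    have : c - 1 = (k : ℝ) + 2 * m - 2 := by simp only [hc]; ring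
    rw [this]
  have hGa : Gfun c ((m : ℝ) - 1) = -(2 * ((k : ℝ) + 2)) /
      (((k : ℝ) + 2 * m - 2) ^ 2 * Real.sqrt (((m : ℝ) - 2) * ((k : ℝ) + m))) := by
    unfold Gfun
    have harg : (c - ((m : ℝ) - 1)) * (((m : ℝ) - 1) - 1) = ((m : ℝ) - 2) * ((k : ℝ) + m) := by
      simp only [hc]; ring
    rw [harg]
    have : 2 * ((m : ℝ) - 1) - c - 1 = -((k : ℝ) + 2) := by simp only [hc]; ring
    rw [this]
    have : c - 1 = (k : ℝ) + 2 * m - 2 := by simp only [hc]; ring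
    rw [this]
    ring
  calc ∑ l ∈ Icc m l0, ffun c (l : ℝ) + ∑ l ∈ Ioc l0 (k + m), ffun c (l : ℝ)
      ≤ (∫ x in ((m : ℝ) - 1)..(l0 : ℝ), ffun c x) + ∫ x in ((l0 : ℝ) + 1)..((k : ℝ) + m + 1), ffun c x :=
        add_le_add hL hR
    _ ≤ ∫ x in ((m : ℝ) - 1)..((k : ℝ) + m + 1), ffun c x := by
        rw [← hadd2, ← hadd1]
        linarith
    _ = Gfun c ((k : ℝ) + m + 1) - Gfun c ((m : ℝ) - 1) := hFTC
    _ = 4 * ((k : ℝ) + 2) / (((k : ℝ) + 2 * m - 2) ^ 2 * Real.sqrt (((m : ℝ) - 2) * ((k : ℝ) + m))) := by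
        rw [hGb, hGa]
        have hden : 0 < ((k : ℝ) + 2 * m - 2) ^ 2 * Real.sqrt (((m : ℝ) - 2) * ((k : ℝ) + m)) := by
          have : (0:ℝ) < (k : ℝ) + 2 * m - 2 := by linarith
          positivity
        field_simp
        ring

lemma rpow32 {a : ℝ} (ha : 0 ≤ a) : a ^ ((3 : ℝ) / 2) = a * Real.sqrt a := by
  rcases ha.eq_or_lt with h | h
  · rw [← h, Real.zero_rpow (by norm_num), Real.sqrt_zero, mul_zero]
  · rw [show (3 : ℝ) / 2 = 1 + 1 / 2 by norm_num, Real.rpow_add h, Real.rpow_one,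
      ← Real.sqrt_eq_rpow]


lemma abs_inner_sum_le (α β : ℕ → ℝ) (A1 B1 : ℝ) (hA : 0 < A1) (hB : 0 < B1)
    (hα : ∀ n : ℕ, 2 ≤ n → |α n| ≤ A1 / ((n : ℝ) - 1) ^ ((3 : ℝ) / 2))
    (hβ : ∀ n : ℕ, 2 ≤ n → |β n| ≤ B1 / ((n : ℝ) - 1) ^ ((3 : ℝ) / 2))
    (k m : ℕ) (hm : 3 ≤ m) :
    |∑ l ∈ Finset.Icc m (k + m), α (k + 2 * m - l) * β l * Acoef m (k + 2 * m) l|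
      ≤ A1 * B1 * (4 * ((k : ℝ) + 2)) * hfun (k : ℝ) (m : ℝ) := by
  set c : ℝ := (k : ℝ) + 2 * m - 1 with hc
  have hmr : (3 : ℝ) ≤ (m : ℝ) := by exact_mod_cast hm
  have habs : ∀ l ∈ Finset.Icc m (k + m), |α (k + 2 * m - l) * β l * Acoef m (k + 2 * m) l|
      ≤ A1 * B1 * ffun c (l : ℝ) := by
    intro l hl
    rw [Finset.mem_Icc] at hl
    obtain ⟨hml, hlk⟩ := hl
    have hlr : (l : ℝ) ≤ (k : ℝ) + m := by exact_mod_cast hlk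
    have hmlr : (m : ℝ) ≤ (l : ℝ) := by exact_mod_cast hml
    have hX : 0 < c - l := by rw [hc]; linarith
    have hY : 0 < (l : ℝ) - 1 := by linarith
    have hsX := Real.sqrt_pos.2 hX
    have hsY := Real.sqrt_pos.2 hY
    -- alpha bound
    have h2a : 2 ≤ k + 2 * m - l := by omega
    have hle : l ≤ k + 2 * m := by omega
    have nα := hα _ h2a
    have hcast : ((k + 2 * m - l : ℕ) : ℝ) = (k : ℝ) + 2 * m - l := by
      rw [Nat.cast_sub hle]; push_cast; ring
    rw [hcast] at nα
    have harg : (k : ℝ) + 2 * m - l - 1 = c - l := by rw [hc]; ring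
    rw [harg, rpow32 hX.le] at nα
    -- beta bound
    have nβ := hβ l (by omega)
    rw [rpow32 hY.le] at nβ
    -- Acoef bound
    obtain ⟨hC0, hC1⟩ := Acoef_bounds k m l hml hlk
    have hCa : |Acoef m (k + 2 * m) l| ≤ 1 := abs_le.mpr ⟨by linarith, hC1⟩
    calc |α (k + 2 * m - l) * β l * Acoef m (k + 2 * m) l|
        = |α (k + 2 * m - l)| * |β l| * |Acoef m (k + 2 * m) l| := by
          rw [abs_mul, abs_mul]
      _ ≤ (A1 / ((c - l) * Real.sqrt (c - l))) * (B1 / (((l : ℝ) - 1) * Real.sqrt ((l : ℝ) - 1))) * 1 := by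
          apply mul_le_mul _ hCa (abs_nonneg _) (by positivity)
          exact mul_le_mul nα nβ (abs_nonneg _) (by positivity)
      _ = A1 * B1 * ffun c (l : ℝ) := by
          unfold ffun
          rw [Real.sqrt_mul hX.le]
          field_simp
  calc |∑ l ∈ Finset.Icc m (k + m), α (k + 2 * m - l) * β l * Acoef m (k + 2 * m) l|
      ≤ ∑ l ∈ Finset.Icc m (k + m), |α (k + 2 * m - l) * β l * Acoef m (k + 2 * m) l| :=
        Finset.abs_sum_le_sum_abs _ _
    _ ≤ ∑ l ∈ Finset.Icc m (k + m), A1 * B1 * ffun c (l : ℝ) := Finset.sum_le_sum habs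
    _ = A1 * B1 * ∑ l ∈ Finset.Icc m (k + m), ffun c (l : ℝ) := by rw [Finset.mul_sum]
    _ ≤ A1 * B1 * (4 * ((k : ℝ) + 2) /
          (((k : ℝ) + 2 * m - 2) ^ 2 * Real.sqrt (((m : ℝ) - 2) * ((k : ℝ) + m)))) := by
        apply mul_le_mul_of_nonneg_left (inner_sum_le k m hm) (by positivity)
    _ = A1 * B1 * (4 * ((k : ℝ) + 2)) * hfun (k : ℝ) (m : ℝ) := by
        unfold hfun
        rw [show ((m : ℝ) - 2) * ((m : ℝ) + k) = ((m : ℝ) - 2) * ((k : ℝ) + m) by ring]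
        ring


set_option maxHeartbeats 1000000 in
/-- truncation error bound for the coefficient series. -/
theorem coefficient_truncation_error (α β : ℕ → ℝ) (A1 B1 : ℝ) (hA : 0 < A1) (hB : 0 < B1)
    (hα : ∀ n : ℕ, 2 ≤ n → |α n| ≤ A1 / ((n : ℝ) - 1) ^ ((3 : ℝ) / 2))
    (hβ : ∀ n : ℕ, 2 ≤ n → |β n| ≤ B1 / ((n : ℝ) - 1) ^ ((3 : ℝ) / 2))
    (k M : ℕ) (hM : 3 ≤ M) :
    |(∑' m : ℕ, ∑ l ∈ Finset.Icc m (k + m),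
        α (k + 2 * m - l) * β l * Acoef m (k + 2 * m) l)
      - ∑ m ∈ Finset.range (M + 1), ∑ l ∈ Finset.Icc m (k + m),
          α (k + 2 * m - l) * β l * Acoef m (k + 2 * m) l|
      ≤ 4 * A1 * B1 * ((k : ℝ) + 2) /
          (((k : ℝ) + 2 * (M : ℝ) - 2) *
            (2 * (Real.sqrt (((M : ℝ) - 2) * ((k : ℝ) + (M : ℝ))) + (M : ℝ) - 1) + (k : ℝ))) := by
  set cm : ℕ → ℝ := fun m => ∑ l ∈ Finset.Icc m (k + m),
      α (k + 2 * m - l) * β l * Acoef m (k + 2 * m) l with hcm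
  have hk0 : (0 : ℝ) ≤ (k : ℝ) := Nat.cast_nonneg k
  have hMr : (3 : ℝ) ≤ (M : ℝ) := by exact_mod_cast hM
  set K : ℝ := A1 * B1 * (4 * ((k : ℝ) + 2)) with hK
  have hKpos : 0 < K := by rw [hK]; positivity
  have hper : ∀ m : ℕ, 3 ≤ m → |cm m| ≤ K * hfun (k : ℝ) (m : ℝ) := fun m hm =>
    abs_inner_sum_le α β A1 B1 hA hB hα hβ k m hm
  -- bound on hfun for summability
  have hfun_le : ∀ n : ℕ, hfun (k : ℝ) ((n : ℝ) + M + 1) ≤ 1 / ((n : ℝ) + 1) ^ 2 := by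
    intro n
    have hnr : (0 : ℝ) ≤ (n : ℝ) := Nat.cast_nonneg n
    unfold hfun
    have hs1 : (1 : ℝ) ≤ Real.sqrt (((n : ℝ) + M + 1 - 2) * ((n : ℝ) + M + 1 + k)) := by
      have h := Real.sqrt_le_sqrt (show (1 : ℝ) ≤ ((n : ℝ) + M + 1 - 2) * ((n : ℝ) + M + 1 + k) by nlinarith)
      simpa using h
    have hD : ((n : ℝ) + 1) ≤ (k : ℝ) + 2 * ((n : ℝ) + M + 1) - 2 := by linarith
    apply one_div_le_one_div_of_le (by positivity)
    nlinarith [Real.sqrt_nonneg (((n : ℝ) + M + 1 - 2) * ((n : ℝ) + M + 1 + k))]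
  have hcast1 : ∀ n : ℕ, ((n + (M + 1) : ℕ) : ℝ) = (n : ℝ) + M + 1 := by
    intro n; push_cast; ring
  have habs_bound : ∀ n : ℕ, |cm (n + (M + 1))| ≤ K * (1 / ((n : ℝ) + 1) ^ 2) := by
    intro n
    have h3 : 3 ≤ n + (M + 1) := by omega
    have := hper (n + (M + 1)) h3
    rw [hcast1 n] at this
    calc |cm (n + (M + 1))| ≤ K * hfun (k : ℝ) ((n : ℝ) + M + 1) := this
      _ ≤ K * (1 / ((n : ℝ) + 1) ^ 2) :=
          mul_le_mul_of_nonneg_left (hfun_le n) hKpos.le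
  have hsummable_bound : Summable (fun n : ℕ => K * (1 / ((n : ℝ) + 1) ^ 2)) := by
    apply Summable.mul_left
    have h0 : Summable (fun n : ℕ => 1 / (n : ℝ) ^ 2) :=
      Real.summable_one_div_nat_pow.2 one_lt_two
    have h1 := (summable_nat_add_iff 1).2 h0
    apply h1.congr
    intro n; push_cast; ring
  have hsum_abs : Summable (fun n : ℕ => |cm (n + (M + 1))|) :=
    Summable.of_nonneg_of_le (fun n => abs_nonneg _) habs_bound hsummable_bound
  have hsum_shift : Summable (fun n : ℕ => cm (n + (M + 1))) := by
    apply Summable.of_abs hsum_abs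
  have hsum : Summable cm := (summable_nat_add_iff (M + 1)).1 hsum_shift
  have hsplit := Summable.sum_add_tsum_nat_add (M + 1) hsum
  have hgoal_eq : (∑' m : ℕ, cm m) - ∑ m ∈ Finset.range (M + 1), cm m
      = ∑' n : ℕ, cm (n + (M + 1)) := by
    rw [← hsplit]; ring
  rw [hgoal_eq]
  -- partial sums bound
  set S : ℝ := Real.sqrt (((M : ℝ) - 2) * ((k : ℝ) + (M : ℝ))) with hS
  have hS0 : 0 ≤ S := Real.sqrt_nonneg _
  have hS2 : S ^ 2 = ((M : ℝ) - 2) * ((k : ℝ) + (M : ℝ)) := Real.sq_sqrt (by nlinarith)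
  have hD : (0 : ℝ) < (k : ℝ) + 2 * (M : ℝ) - 2 := by linarith
  have hden : (0 : ℝ) < 2 * (S + (M : ℝ) - 1) + (k : ℝ) := by nlinarith
  set R : ℝ := 4 * A1 * B1 * ((k : ℝ) + 2) /
      (((k : ℝ) + 2 * (M : ℝ) - 2) * (2 * (S + (M : ℝ) - 1) + (k : ℝ))) with hR
  have hFM : Ffun (k : ℝ) (M : ℝ) = 2 * S / (((k : ℝ) + 2) ^ 2 * ((k : ℝ) + 2 * M - 2)) := by
    unfold Ffun
    rw [hS, show ((M : ℝ) - 2) * ((M : ℝ) + k) = ((M : ℝ) - 2) * ((k : ℝ) + M) by ring]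
  have hclosed : K * (1 / ((k : ℝ) + 2) ^ 2 - Ffun (k : ℝ) (M : ℝ)) = R := by
    rw [hFM, hK, hR]
    have hk2 : ((k : ℝ) + 2) ≠ 0 := by positivity
    field_simp
    linear_combination (-4) * hS2
  have hpartial : ∀ n : ℕ, ∑ i ∈ Finset.range n, |cm (i + (M + 1))| ≤ R := by
    intro n
    have hstep : ∀ i : ℕ, |cm (i + (M + 1))|
        ≤ K * (Ffun (k : ℝ) ((M : ℝ) + i + 1) - Ffun (k : ℝ) ((M : ℝ) + i)) := by
      intro i
      have h3 : 3 ≤ i + (M + 1) := by omega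
      have h1 := hper (i + (M + 1)) h3
      rw [hcast1 i] at h1
      have hir : (0 : ℝ) ≤ (i : ℝ) := Nat.cast_nonneg i
      have h2 := step_outer hk0 (a := (M : ℝ) + i) (by linarith)
      have hargeq : (i : ℝ) + M + 1 = (M : ℝ) + i + 1 := by ring
      rw [hargeq] at h1
      calc |cm (i + (M + 1))| ≤ K * hfun (k : ℝ) ((M : ℝ) + i + 1) := h1
        _ ≤ K * (Ffun (k : ℝ) ((M : ℝ) + i + 1) - Ffun (k : ℝ) ((M : ℝ) + i)) :=
            mul_le_mul_of_nonneg_left h2 hKpos.le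
    calc ∑ i ∈ Finset.range n, |cm (i + (M + 1))|
        ≤ ∑ i ∈ Finset.range n, K * (Ffun (k : ℝ) ((M : ℝ) + i + 1) - Ffun (k : ℝ) ((M : ℝ) + i)) :=
          Finset.sum_le_sum (fun i _ => hstep i)
      _ = K * ∑ i ∈ Finset.range n,
            (Ffun (k : ℝ) ((M : ℝ) + i + 1) - Ffun (k : ℝ) ((M : ℝ) + i)) := by
          rw [Finset.mul_sum]
      _ = K * (Ffun (k : ℝ) ((M : ℝ) + n) - Ffun (k : ℝ) ((M : ℝ) + 0)) := by
          congr 1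
          have hterm : ∀ i : ℕ, Ffun (k : ℝ) ((M : ℝ) + i + 1) - Ffun (k : ℝ) ((M : ℝ) + i)
              = (fun j : ℕ => Ffun (k : ℝ) ((M : ℝ) + j)) (i + 1)
                - (fun j : ℕ => Ffun (k : ℝ) ((M : ℝ) + j)) i := by
            intro i
            simp only
            congr 2
            push_cast; ring
          rw [Finset.sum_congr rfl (fun i _ => hterm i), Finset.sum_range_sub
            (fun j : ℕ => Ffun (k : ℝ) ((M : ℝ) + j))]
          norm_num
      _ ≤ K * (1 / ((k : ℝ) + 2) ^ 2 - Ffun (k : ℝ) ((M : ℝ) + 0)) := by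
          apply mul_le_mul_of_nonneg_left _ hKpos.le
          have := Ffun_le hk0 (x := (M : ℝ) + n) (by linarith [Nat.cast_nonneg (α := ℝ) n])
          linarith
      _ = R := by rw [show (M : ℝ) + 0 = (M : ℝ) by ring]; exact hclosed
  calc |∑' n : ℕ, cm (n + (M + 1))| ≤ ∑' n : ℕ, |cm (n + (M + 1))| := by
        have := norm_tsum_le_tsum_norm (f := fun n : ℕ => cm (n + (M + 1)))
          (by simpa [Real.norm_eq_abs] using hsum_abs)
        simpa [Real.norm_eq_abs] using this
    _ ≤ R := Real.tsum_le_of_sum_range_le (fun n => abs_nonneg _) hpartial
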